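/- For all x in R^n, Î(x) = 1 - A(|x|), where A(s) := 2γ_n ∫_0^1 (1-u^2)^{(n-1)/2} (sin(us/2))^2 du and γ_n = (∫_0^1 (1-u^2)^{(n-1)/2} du)^{-1}. -/

import Mathlib

open MeasureTheory Metric

lemma ball_scale (m : ℕ) {r : ℝ} (hr : 0 < r) :
    volume (ball (0 : EuclideanSpace ℝ (Fin m)) r)
      = ENNReal.ofReal (r ^ m) * volume (ball (0 : EuclideanSpace ℝ (Fin m)) 1) := by
  cases m with
  | zero =>
      have e1 : (ball (0 : EuclideanSpace ℝ (Fin 0)) r) = Set.univ := by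
        ext x; simp [Subsingleton.elim x 0, hr]
      have e2 : (ball (0 : EuclideanSpace ℝ (Fin 0)) 1) = Set.univ := by
        ext x; simp [Subsingleton.elim x 0]
      simp [e1, e2]
  | succ k =>
      have := MeasureTheory.Measure.addHaar_ball (volume : Measure (EuclideanSpace ℝ (Fin (k+1)))) 0 hr.le
      rwa [finrank_euclideanSpace_fin] at this

lemma slice_ball (m : ℕ) (f : ℝ → ℂ) (hf : Continuous f) (hb : ∀ t, ‖f t‖ ≤ 1) :
    ∫ x : EuclideanSpace ℝ (Fin (m+1)), Set.indicator (ball 0 1) (fun x => f (x 0)) x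
      = (volume (ball (0 : EuclideanSpace ℝ (Fin m)) 1)).toReal •
          ∫ t in (-1:ℝ)..1, ((1 - t^2) ^ ((m:ℝ)/2) : ℝ) • f t := by
  set Vm : ℝ := (volume (ball (0 : EuclideanSpace ℝ (Fin m)) 1)).toReal with hVmdef
  set F : (Fin (m+1) → ℝ) → ℂ :=
    fun y => Set.indicator {y : Fin (m+1) → ℝ | ∑ i, y i ^ 2 < 1} (fun y => f (y 0)) y with hF
  have hmem : ∀ x : EuclideanSpace ℝ (Fin (m+1)),
      x ∈ ball (0:EuclideanSpace ℝ (Fin (m+1))) 1 ↔ ∑ i, x i ^ 2 < 1 := by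
    intro x
    rw [mem_ball_zero_iff, EuclideanSpace.norm_eq]
    rw [show (1:ℝ) = Real.sqrt 1 by simp]
    rw [Real.sqrt_lt_sqrt_iff (by positivity)]
    simp [sq_abs]
  have h1 : ∫ x : EuclideanSpace ℝ (Fin (m+1)), Set.indicator (ball 0 1) (fun x => f (x 0)) x
      = ∫ y : Fin (m+1) → ℝ, F y := by
    rw [← (EuclideanSpace.volume_preserving_symm_measurableEquiv_toLp (Fin (m+1))).integral_comp
      (MeasurableEquiv.measurableEmbedding _) F]
    congr 1 with x
    show Set.indicator (ball 0 1) (fun x => f (x 0)) x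
        = Set.indicator {y : Fin (m+1) → ℝ | ∑ i, y i ^ 2 < 1} (fun y => f (y 0))
            ((MeasurableEquiv.toLp 2 (Fin (m+1) → ℝ)).symm x)
    by_cases hx : x ∈ ball (0:EuclideanSpace ℝ (Fin (m+1))) 1
    · rw [Set.indicator_of_mem hx, Set.indicator_of_mem]
      · rfl
      · exact (hmem x).1 hx
    · rw [Set.indicator_of_notMem hx, Set.indicator_of_notMem]
      exact fun h => hx ((hmem x).2 h)
  -- step 2: Fubini via piFinSuccAbove at 0
  set H : ℝ × (Fin m → ℝ) → ℂ :=
    fun p => Set.indicator {y : Fin m → ℝ | ∑ j, y j ^ 2 < 1 - p.1 ^ 2} (fun _ => f p.1) p.2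
    with hH
  have hFH : ∀ p : ℝ × (Fin m → ℝ),
      F ((MeasurableEquiv.piFinSuccAbove (fun _ : Fin (m+1) => ℝ) 0).symm p) = H p := by
    intro p
    have hsum : ∑ i, (((MeasurableEquiv.piFinSuccAbove (fun _ : Fin (m+1) => ℝ) 0).symm p) i) ^ 2
        = p.1 ^ 2 + ∑ j, p.2 j ^ 2 := by
      simp only [MeasurableEquiv.piFinSuccAbove_symm_apply]
      rw [Fin.sum_univ_succAbove _ 0]
      simp
    have hzero : ((MeasurableEquiv.piFinSuccAbove (fun _ : Fin (m+1) => ℝ) 0).symm p) 0 = p.1 := by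
      simp [MeasurableEquiv.piFinSuccAbove_symm_apply]
    rw [hF, hH]
    simp only [Set.indicator_apply, Set.mem_setOf_eq, hsum, hzero]
    exact if_congr (by constructor <;> intro h <;> linarith) rfl rfl
  have h2 : ∫ y : Fin (m+1) → ℝ, F y = ∫ p : ℝ × (Fin m → ℝ), H p := by
    rw [← ((volume_preserving_piFinSuccAbove (fun _ : Fin (m+1) => ℝ) 0).symm
        (MeasurableEquiv.piFinSuccAbove (fun _ : Fin (m+1) => ℝ) 0)).integral_comp
      (MeasurableEquiv.measurableEmbedding _) F]
    exact integral_congr_ae (Filter.Eventually.of_forall hFH)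
  -- integrability of H
  have hHmeas : MeasurableSet {p : ℝ × (Fin m → ℝ) | ∑ j, p.2 j ^ 2 < 1 - p.1 ^ 2} := by
    apply measurableSet_lt
    · exact (Finset.measurable_sum _ fun j _ => (measurable_pi_apply j).comp measurable_snd |>.pow_const 2)
    · exact (measurable_const.sub ((measurable_fst).pow_const 2))
  have hHind : H = Set.indicator {p : ℝ × (Fin m → ℝ) | ∑ j, p.2 j ^ 2 < 1 - p.1 ^ 2}
      (fun p => f p.1) := by
    funext p
    rw [hH]
    simp only [Set.indicator_apply, Set.mem_setOf_eq]
  have hSfin : volume {p : ℝ × (Fin m → ℝ) | ∑ j, p.2 j ^ 2 < 1 - p.1 ^ 2} ≠ ⊤ := by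
    have hsub : {p : ℝ × (Fin m → ℝ) | ∑ j, p.2 j ^ 2 < 1 - p.1 ^ 2}
        ⊆ Set.Ioo (-1:ℝ) 1 ×ˢ (Set.univ.pi fun _ : Fin m => Set.Ioo (-1:ℝ) 1) := by
      rintro ⟨t, y⟩ hp
      simp only [Set.mem_setOf_eq] at hp
      have hsumnn : (0:ℝ) ≤ ∑ j, y j ^ 2 := Finset.sum_nonneg fun j _ => sq_nonneg _
      constructor
      · constructor <;> nlinarith
      · intro j _
        have h1 : y j ^ 2 ≤ ∑ j, y j ^ 2 :=
          Finset.single_le_sum (fun j _ => sq_nonneg (y j)) (Finset.mem_univ j)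
        constructor <;> nlinarith
    refine (lt_of_le_of_lt (measure_mono hsub) ?_).ne
    rw [show (volume : Measure (ℝ × (Fin m → ℝ))) = (volume : Measure ℝ).prod volume from rfl,
      Measure.prod_prod, Real.volume_Ioo, volume_pi_pi]
    simp [Real.volume_Ioo]
    exact ENNReal.mul_lt_top ENNReal.ofReal_lt_top (ENNReal.pow_lt_top ENNReal.ofReal_lt_top)
  have hHint : Integrable H := by
    rw [hHind]
    refine (MeasureTheory.Measure.integrableOn_of_bounded (M := 1) hSfin
      (hf.comp continuous_fst).aestronglyMeasurable
      (Filter.Eventually.of_forall fun p => hb p.1)).integrable_indicator hHmeas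
  -- Fubini
  have h3 : ∫ p : ℝ × (Fin m → ℝ), H p = ∫ t : ℝ, ∫ y : Fin m → ℝ, H (t, y) :=
    MeasureTheory.integral_prod H hHint
  -- inner integral
  have hTmeas : ∀ t : ℝ, MeasurableSet {y : Fin m → ℝ | ∑ j, y j ^ 2 < 1 - t ^ 2} := by
    intro t
    apply measurableSet_lt
    · exact Finset.measurable_sum _ fun j _ => (measurable_pi_apply j).pow_const 2
    · exact measurable_const
  have h4 : ∀ t : ℝ, ∫ y : Fin m → ℝ, H (t, y)
      = (volume {y : Fin m → ℝ | ∑ j, y j ^ 2 < 1 - t ^ 2}).toReal • f t := by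
    intro t
    rw [hH]
    exact integral_indicator_const (f t) (hTmeas t)
  -- the volume of the slice
  have hVfin : volume (ball (0 : EuclideanSpace ℝ (Fin m)) 1) ≠ ⊤ := measure_ball_lt_top.ne
  have hvol : ∀ t : ℝ, volume {y : Fin m → ℝ | ∑ j, y j ^ 2 < 1 - t ^ 2}
      = Set.indicator (Set.Ioo (-1:ℝ) 1)
          (fun t => ENNReal.ofReal ((1 - t^2) ^ ((m:ℝ)/2)) *
            volume (ball (0 : EuclideanSpace ℝ (Fin m)) 1)) t := by
    intro t
    by_cases ht : t ∈ Set.Ioo (-1:ℝ) 1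
    · rw [Set.indicator_of_mem ht]
      obtain ⟨ht1, ht2⟩ := ht
      have hpos : 0 < 1 - t ^ 2 := by nlinarith
      have hr : 0 < Real.sqrt (1 - t ^ 2) := Real.sqrt_pos.2 hpos
      have hpre : (MeasurableEquiv.toLp 2 (Fin m → ℝ)).symm ⁻¹'
          {y : Fin m → ℝ | ∑ j, y j ^ 2 < 1 - t ^ 2}
            = ball (0 : EuclideanSpace ℝ (Fin m)) (Real.sqrt (1 - t ^ 2)) := by
        ext x
        rw [Set.mem_preimage, mem_ball_zero_iff, EuclideanSpace.norm_eq]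
        rw [Real.sqrt_lt_sqrt_iff (by positivity)]
        simp only [Set.mem_setOf_eq, sq_abs, Real.norm_eq_abs]
        exact Iff.rfl
      rw [← (EuclideanSpace.volume_preserving_symm_measurableEquiv_toLp (Fin m)).measure_preimage
        (hTmeas t).nullMeasurableSet, hpre, ball_scale m hr]
      congr 2
      rw [← Real.rpow_natCast (Real.sqrt (1 - t ^ 2)) m, Real.sqrt_eq_rpow,
        ← Real.rpow_mul hpos.le, one_div, inv_mul_eq_div]
    · rw [Set.indicator_of_notMem ht]
      have hempty : {y : Fin m → ℝ | ∑ j, y j ^ 2 < 1 - t ^ 2} = (∅ : Set (Fin m → ℝ)) := by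
        ext y
        simp only [Set.mem_setOf_eq, Set.mem_empty_iff_false, iff_false, not_lt]
        have h1t : (1:ℝ) ≤ t ^ 2 := by
          simp only [Set.mem_Ioo, not_and_or, not_lt] at ht
          rcases ht with h | h <;> nlinarith
        have h0 : (0:ℝ) ≤ ∑ j, y j ^ 2 := Finset.sum_nonneg fun j _ => sq_nonneg _
        linarith
      rw [hempty, measure_empty]
  have hVnn : 0 ≤ Vm := ENNReal.toReal_nonneg
  -- assemble
  have h6 : ∀ t : ℝ, (volume {y : Fin m → ℝ | ∑ j, y j ^ 2 < 1 - t ^ 2}).toReal • f t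
      = Set.indicator (Set.Ioo (-1:ℝ) 1)
          (fun t => (((1 - t^2) ^ ((m:ℝ)/2)) * Vm) • f t) t := by
    intro t
    rw [hvol t]
    by_cases ht : t ∈ Set.Ioo (-1:ℝ) 1
    · rw [Set.indicator_of_mem ht, Set.indicator_of_mem ht,
        ENNReal.toReal_mul, ENNReal.toReal_ofReal (Real.rpow_nonneg (by nlinarith [ht.1, ht.2]) _)]
    · rw [Set.indicator_of_notMem ht, Set.indicator_of_notMem ht]
      simp
  calc ∫ x : EuclideanSpace ℝ (Fin (m+1)), Set.indicator (ball 0 1) (fun x => f (x 0)) x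
      = ∫ t : ℝ, ∫ y : Fin m → ℝ, H (t, y) := by rw [h1, h2, h3]
    _ = ∫ t : ℝ, Set.indicator (Set.Ioo (-1:ℝ) 1)
          (fun t => (((1 - t^2) ^ ((m:ℝ)/2)) * Vm) • f t) t := by
        refine integral_congr_ae (Filter.Eventually.of_forall fun t => ?_)
        show ∫ y : Fin m → ℝ, H (t, y) = _
        rw [h4 t, h6 t]
    _ = ∫ t in Set.Ioo (-1:ℝ) 1, (((1 - t^2) ^ ((m:ℝ)/2)) * Vm) • f t := by
        rw [integral_indicator measurableSet_Ioo]
    _ = ∫ t in (-1:ℝ)..1, (((1 - t^2) ^ ((m:ℝ)/2)) * Vm) • f t := by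
        rw [intervalIntegral.integral_of_le (by norm_num : (-1:ℝ) ≤ 1),
          ← MeasureTheory.integral_Ioc_eq_integral_Ioo]
    _ = Vm • ∫ t in (-1:ℝ)..1, ((1 - t^2) ^ ((m:ℝ)/2) : ℝ) • f t := by
        rw [← intervalIntegral.integral_smul]
        congr 1 with t
        rw [smul_smul, mul_comm]

lemma cont_rpow (m : ℕ) : Continuous (fun t : ℝ => (1 - t^2) ^ ((m:ℝ)/2)) :=
  (continuous_const.sub (continuous_pow 2)).rpow_const (fun _ => Or.inr (by positivity))

lemma integral_odd_zero (h : ℝ → ℝ) (hodd : ∀ t, h (-t) = - h t) :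
    ∫ t in (-1:ℝ)..1, h t = 0 := by
  have h1 : ∫ t in (-1:ℝ)..1, h (-t) = ∫ t in (-1:ℝ)..1, h t := by
    simpa using intervalIntegral.integral_comp_neg (a := (-1:ℝ)) (b := 1) h
  have h2 : ∫ t in (-1:ℝ)..1, h (-t) = - ∫ t in (-1:ℝ)..1, h t := by
    simp only [hodd]
    exact intervalIntegral.integral_neg
  linarith

lemma integral_even_eq_two_mul (h : ℝ → ℝ) (hc : Continuous h) (heven : ∀ t, h (-t) = h t) :
    ∫ t in (-1:ℝ)..1, h t = 2 * ∫ t in (0:ℝ)..1, h t := by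
  have hsplit : ∫ t in (-1:ℝ)..1, h t = (∫ t in (-1:ℝ)..0, h t) + ∫ t in (0:ℝ)..1, h t :=
    (intervalIntegral.integral_add_adjacent_intervals
      (hc.intervalIntegrable _ _) (hc.intervalIntegrable _ _)).symm
  have hneg : ∫ t in (-1:ℝ)..0, h t = ∫ t in (0:ℝ)..1, h t := by
    have h0 := intervalIntegral.integral_comp_neg (a := (0:ℝ)) (b := 1) h
    simp only [heven, neg_zero] at h0
    rw [← h0]
  rw [hsplit, hneg]; ring

lemma exp_neg_I_mul (r : ℝ) :
    Complex.exp (-(Complex.I * (r:ℂ))) = ((Real.cos r : ℝ) : ℂ) - ((Real.sin r : ℝ) : ℂ) * Complex.I := by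
  rw [show -(Complex.I * (r:ℂ)) = ((-r : ℝ) : ℂ) * Complex.I by push_cast; ring,
    Complex.exp_mul_I, ← Complex.ofReal_cos, ← Complex.ofReal_sin, Real.cos_neg, Real.sin_neg]
  push_cast; ring

lemma intervalIntegral_complex_ofReal {a b : ℝ} (f : ℝ → ℝ) :
    (∫ x in a..b, ((f x : ℝ) : ℂ)) = ((∫ x in a..b, f x : ℝ) : ℂ) :=
  RCLike.intervalIntegral_ofReal

lemma oneD (m : ℕ) (s : ℝ) :
    (∫ t in (-1:ℝ)..1, ((1 - t^2) ^ ((m:ℝ)/2) : ℝ) • Complex.exp (-(Complex.I * ((s * t : ℝ) : ℂ))))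
      = ((2 * ∫ t in (0:ℝ)..1, (1 - t^2) ^ ((m:ℝ)/2) * Real.cos (s*t) : ℝ) : ℂ) := by
  have hg := cont_rpow m
  have key : ∀ t:ℝ, ((1 - t^2) ^ ((m:ℝ)/2) : ℝ) • Complex.exp (-(Complex.I * ((s * t : ℝ) : ℂ)))
      = (((1 - t^2) ^ ((m:ℝ)/2) * Real.cos (s*t) : ℝ) : ℂ)
        - (((1 - t^2) ^ ((m:ℝ)/2) * Real.sin (s*t) : ℝ) : ℂ) * Complex.I := by
    intro t
    rw [exp_neg_I_mul, Complex.real_smul]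
    push_cast
    ring
  rw [intervalIntegral.integral_congr (g := fun t =>
      (((1 - t^2) ^ ((m:ℝ)/2) * Real.cos (s*t) : ℝ) : ℂ)
        - (((1 - t^2) ^ ((m:ℝ)/2) * Real.sin (s*t) : ℝ) : ℂ) * Complex.I) (fun t _ => key t)]
  rw [intervalIntegral.integral_sub]
  · rw [intervalIntegral.integral_mul_const]
    simp only [intervalIntegral_complex_ofReal]
    have hsin : ∫ t in (-1:ℝ)..1, (1 - t^2) ^ ((m:ℝ)/2) * Real.sin (s*t) = 0 := by
      apply integral_odd_zero
      intro t
      simp [Real.sin_neg, neg_neg, mul_neg]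
    have hcos : ∫ t in (-1:ℝ)..1, (1 - t^2) ^ ((m:ℝ)/2) * Real.cos (s*t)
        = 2 * ∫ t in (0:ℝ)..1, (1 - t^2) ^ ((m:ℝ)/2) * Real.cos (s*t) := by
      apply integral_even_eq_two_mul
      · exact hg.mul (Real.continuous_cos.comp (continuous_const.mul continuous_id))
      · intro t
        simp [Real.cos_neg, mul_neg, neg_neg]
    rw [hsin, hcos]
    simp
  · exact ((Complex.continuous_ofReal.comp (hg.mul
      (Real.continuous_cos.comp (continuous_const.mul continuous_id)))).intervalIntegrable _ _)
  · exact (((Complex.continuous_ofReal.comp (hg.mul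
      (Real.continuous_sin.comp (continuous_const.mul continuous_id)))).mul continuous_const).intervalIntegrable _ _)

lemma cos_eq_one_sub (x : ℝ) : Real.cos x = 1 - 2 * Real.sin (x/2)^2 := by
  have h2 : Real.cos (2 * (x/2)) = 2 * Real.cos (x/2)^2 - 1 := Real.cos_two_mul _
  rw [show 2*(x/2) = x by ring] at h2
  nlinarith [Real.sin_sq_add_cos_sq (x/2)]

noncomputable def unitBallIndicator (n : ℕ) : EuclideanSpace ℝ (Fin n) → ℝ :=
  Set.indicator (ball (0 : EuclideanSpace ℝ (Fin n)) 1)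
    (fun _ => ((volume (ball (0 : EuclideanSpace ℝ (Fin n)) 1)).toReal)⁻¹)

noncomputable def gammaN (n : ℕ) : ℝ :=
  (∫ u in (0:ℝ)..1, (1 - u ^ 2) ^ (((n : ℝ) - 1) / 2))⁻¹

noncomputable def Afun (n : ℕ) (s : ℝ) : ℝ :=
  2 * gammaN n *
    ∫ u in (0:ℝ)..1, (1 - u ^ 2) ^ (((n : ℝ) - 1) / 2) * (Real.sin (u * s / 2)) ^ 2

/-- `Î(ξ) = 1 - A(|ξ|)`, with `Î(ξ) = ∫ I(x) e^{-i x·ξ} dx`. -/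
theorem fourier_unitBallIndicator_eq_one_sub_A (n : ℕ) (hn : 1 ≤ n)
    (ξ : EuclideanSpace ℝ (Fin n)) :
    ∫ x : EuclideanSpace ℝ (Fin n),
        (unitBallIndicator n x : ℂ) * Complex.exp (-(Complex.I * ((inner ℝ x ξ : ℝ) : ℂ))) =
      ((1 - Afun n ‖ξ‖ : ℝ) : ℂ) := by
  obtain ⟨m, rfl⟩ : ∃ m, n = m + 1 := ⟨n - 1, (Nat.succ_pred_eq_of_pos hn).symm⟩
  set s : ℝ := ‖ξ‖ with hs
  -- an orthonormal basis adapted to ξ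
  have hbasis : ∃ b : OrthonormalBasis (Fin (m+1)) ℝ (EuclideanSpace ℝ (Fin (m+1))),
      ∀ x : EuclideanSpace ℝ (Fin (m+1)), (inner ℝ x ξ : ℝ) = s * b.repr x 0 := by
    by_cases hξ : ξ = 0
    · exact ⟨EuclideanSpace.basisFun (Fin (m+1)) ℝ, fun x => by simp [hξ, hs]⟩
    · have hnz : ‖ξ‖ ≠ 0 := norm_ne_zero_iff.mpr hξ
      have hvnorm : ‖(‖ξ‖⁻¹ • ξ : EuclideanSpace ℝ (Fin (m+1)))‖ = 1 := by
        rw [norm_smul, norm_inv, norm_norm, inv_mul_cancel₀ hnz]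
      have horth : Orthonormal ℝ (({0} : Set (Fin (m+1))).restrict
          (fun _ : Fin (m+1) => (‖ξ‖⁻¹ • ξ : EuclideanSpace ℝ (Fin (m+1))))) := by
        constructor
        · intro i; exact hvnorm
        · intro i j hij; exact absurd (Subsingleton.elim i j) hij
      obtain ⟨b, hb⟩ := horth.exists_orthonormalBasis_extension_of_card_eq
        (by simp [finrank_euclideanSpace_fin])
      refine ⟨b, fun x => ?_⟩
      have hb0 : b 0 = ‖ξ‖⁻¹ • ξ := hb 0 rfl
      rw [OrthonormalBasis.repr_apply_apply, hb0, real_inner_smul_left, real_inner_comm]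
      rw [hs]
      field_simp
  obtain ⟨b, hb⟩ := hbasis
  set V : ℝ := (volume (ball (0:EuclideanSpace ℝ (Fin (m+1))) 1)).toReal with hV
  set Vm : ℝ := (volume (ball (0:EuclideanSpace ℝ (Fin m)) 1)).toReal with hVm
  set f : ℝ → ℂ := fun t => Complex.exp (-(Complex.I * ((s * t : ℝ) : ℂ))) with hfdef
  have hfc : Continuous f := by
    rw [hfdef]
    exact Complex.continuous_exp.comp ((continuous_const.mul
      (Complex.continuous_ofReal.comp (continuous_const.mul continuous_id))).neg)
  have hfb : ∀ t, ‖f t‖ ≤ 1 := by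
    intro t
    rw [hfdef]
    simp [Complex.norm_exp]
  set G : EuclideanSpace ℝ (Fin (m+1)) → ℂ :=
    fun y => Set.indicator (ball 0 1) (fun y : EuclideanSpace ℝ (Fin (m+1)) => f (y 0)) y with hG
  have hpoint : ∀ x : EuclideanSpace ℝ (Fin (m+1)),
      (unitBallIndicator (m+1) x : ℂ) * Complex.exp (-(Complex.I * ((inner ℝ x ξ : ℝ) : ℂ)))
        = (V⁻¹ : ℝ) • G (b.repr x) := by
    intro x
    have hmemiff : x ∈ ball (0:EuclideanSpace ℝ (Fin (m+1))) 1 ↔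
        b.repr x ∈ ball (0:EuclideanSpace ℝ (Fin (m+1))) 1 := by
      rw [mem_ball_zero_iff, mem_ball_zero_iff, b.repr.norm_map]
    simp only [hG]
    unfold unitBallIndicator
    by_cases hx : x ∈ ball (0:EuclideanSpace ℝ (Fin (m+1))) 1
    · rw [Set.indicator_of_mem hx, Set.indicator_of_mem (hmemiff.1 hx), hb x]
      rw [Complex.real_smul, hfdef]
    · rw [Set.indicator_of_notMem hx, Set.indicator_of_notMem (fun h => hx (hmemiff.2 h))]
      simp
  -- volume identity
  have hVeq : V = Vm * (2 * ∫ t in (0:ℝ)..1, (1 - t^2) ^ ((m:ℝ)/2)) := by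
    have h1 := slice_ball m (fun _ => (1:ℂ)) continuous_const (fun t => by norm_num)
    rw [integral_indicator_const (1:ℂ) measurableSet_ball] at h1
    have h2 : (∫ t in (-1:ℝ)..1, ((1 - t^2) ^ ((m:ℝ)/2) : ℝ) • (1:ℂ))
        = ((∫ t in (-1:ℝ)..1, (1 - t^2) ^ ((m:ℝ)/2) : ℝ) : ℂ) := by
      simp only [Complex.real_smul, mul_one]
      exact intervalIntegral_complex_ofReal _
    rw [h2] at h1
    have h3 : (∫ t in (-1:ℝ)..1, (1 - t^2) ^ ((m:ℝ)/2))
        = 2 * ∫ t in (0:ℝ)..1, (1 - t^2) ^ ((m:ℝ)/2) := by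
      apply integral_even_eq_two_mul _ (cont_rpow m)
      intro t; rw [neg_pow]; norm_num
    rw [h3] at h1
    rw [Complex.real_smul, Complex.real_smul, mul_one, measureReal_def, ← hV, ← hVm] at h1
    have h1' : ((V:ℝ):ℂ) = ((Vm * (2 * ∫ t in (0:ℝ)..1, (1 - t^2) ^ ((m:ℝ)/2)) : ℝ) : ℂ) := by
      rw [h1]; push_cast; ring
    exact_mod_cast h1'
  have hVmpos : 0 < Vm :=
    ENNReal.toReal_pos (measure_ball_pos _ _ one_pos).ne' measure_ball_lt_top.ne
  have hD0pos : 0 < ∫ t in (0:ℝ)..1, (1 - t^2) ^ ((m:ℝ)/2) := by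
    apply intervalIntegral.intervalIntegral_pos_of_pos_on ((cont_rpow m).intervalIntegrable _ _)
    · intro x hx
      exact Real.rpow_pos_of_pos (by nlinarith [hx.1, hx.2]) _
    · norm_num
  -- the transformation chain
  have hchain : (∫ x : EuclideanSpace ℝ (Fin (m+1)),
      (unitBallIndicator (m+1) x : ℂ) * Complex.exp (-(Complex.I * ((inner ℝ x ξ : ℝ) : ℂ))))
        = ((V⁻¹ * (Vm * (2 * ∫ t in (0:ℝ)..1, (1 - t^2) ^ ((m:ℝ)/2) * Real.cos (s*t))) : ℝ) : ℂ) := by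
    calc ∫ x : EuclideanSpace ℝ (Fin (m+1)),
        (unitBallIndicator (m+1) x : ℂ) * Complex.exp (-(Complex.I * ((inner ℝ x ξ : ℝ) : ℂ)))
        = ∫ x : EuclideanSpace ℝ (Fin (m+1)), (V⁻¹ : ℝ) • G (b.repr x) :=
          integral_congr_ae (Filter.Eventually.of_forall hpoint)
      _ = (V⁻¹ : ℝ) • ∫ x : EuclideanSpace ℝ (Fin (m+1)), G (b.repr x) := integral_smul _ _
      _ = (V⁻¹ : ℝ) • ∫ y : EuclideanSpace ℝ (Fin (m+1)), G y := by
          rw [b.measurePreserving_repr.integral_comp b.repr.toHomeomorph.measurableEmbedding G]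
      _ = (V⁻¹ : ℝ) • (Vm • ∫ t in (-1:ℝ)..1, ((1 - t^2) ^ ((m:ℝ)/2) : ℝ) • f t) := by
          rw [hG]
          rw [slice_ball m f hfc hfb]
      _ = (V⁻¹ : ℝ) • (Vm • ((2 * ∫ t in (0:ℝ)..1, (1 - t^2) ^ ((m:ℝ)/2) * Real.cos (s*t) : ℝ) : ℂ)) := by
          rw [hfdef]
          rw [oneD m s]
      _ = ((V⁻¹ * (Vm * (2 * ∫ t in (0:ℝ)..1, (1 - t^2) ^ ((m:ℝ)/2) * Real.cos (s*t))) : ℝ) : ℂ) := by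
          push_cast [Complex.real_smul]
          ring
  rw [hchain]
  congr 1
  -- now a purely real computation
  have hexp : (((m+1:ℕ):ℝ) - 1)/2 = (m:ℝ)/2 := by push_cast; ring
  have hCS : (∫ t in (0:ℝ)..1, (1 - t^2) ^ ((m:ℝ)/2) * Real.cos (s*t))
      = (∫ t in (0:ℝ)..1, (1 - t^2) ^ ((m:ℝ)/2))
        - 2 * ∫ t in (0:ℝ)..1, (1 - t^2) ^ ((m:ℝ)/2) * Real.sin (t*s/2)^2 := by
    have hrw : ∀ t:ℝ, (1 - t^2) ^ ((m:ℝ)/2) * Real.cos (s*t)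
        = (1 - t^2) ^ ((m:ℝ)/2) - 2 * ((1 - t^2) ^ ((m:ℝ)/2) * Real.sin (t*s/2)^2) := by
      intro t
      rw [cos_eq_one_sub (s*t), show s*t/2 = t*s/2 by ring]
      ring
    rw [intervalIntegral.integral_congr (fun t _ => hrw t)]
    have hsc : Continuous fun t:ℝ => Real.sin (t*s/2) :=
      Real.continuous_sin.comp ((continuous_id.mul continuous_const).div_const 2)
    have hc2 : Continuous fun t:ℝ => 2 * ((1 - t^2) ^ ((m:ℝ)/2) * Real.sin (t*s/2)^2) :=
      continuous_const.mul ((cont_rpow m).mul (hsc.pow 2))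
    rw [intervalIntegral.integral_sub ((cont_rpow m).intervalIntegrable _ _)
      (hc2.intervalIntegrable _ _)]
    rw [intervalIntegral.integral_const_mul]
  have hAfun : Afun (m+1) s = 2 * (∫ t in (0:ℝ)..1, (1 - t^2) ^ ((m:ℝ)/2))⁻¹
      * ∫ t in (0:ℝ)..1, (1 - t^2) ^ ((m:ℝ)/2) * Real.sin (t*s/2)^2 := by
    unfold Afun gammaN
    rw [hexp]
  rw [hAfun, hVeq, hCS]
  field_simp
  ring_nf
  simp only [mul_comm s]
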